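/- Let n and m be coprime positive integers, and let f : ℚ(ζ_n) → ℚ(ζ_{nm}) and g : ℚ(ζ_m) → ℚ(ζ_{nm}) be ℚ-algebra homomorphisms. If α is a normal basis generator of ℚ(ζ_n)/ℚ and β is a normal basis generator of ℚ(ζ_m)/ℚ, then the product f(α)·g(β) is a normal basis generator of ℚ(ζ_{nm})/ℚ. -/

import Mathlib

open IsCyclotomicExtension Polynomial

instance cycExtPNat (N : ℕ+) : IsCyclotomicExtension {(N:ℕ)} ℚ (CyclotomicField N ℚ) :=
  CyclotomicField.instIsCyclotomicExtensionSingletonNatSetOfCharZero N ℚ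

instance cycExtPNatMul (n m : ℕ+) :
    IsCyclotomicExtension {((n * m : ℕ+) : ℕ)} ℚ (CyclotomicField ((n : ℕ) * m) ℚ) :=
  CyclotomicField.instIsCyclotomicExtensionSingletonNatSetOfCharZero _ ℚ

/-- The Galois group of `ℚ(ζ_N)` as `(ZMod N)ˣ`. -/
noncomputable def cycAut (N : ℕ+) :
    (CyclotomicField N ℚ ≃ₐ[ℚ] CyclotomicField N ℚ) ≃* (ZMod (N : ℕ))ˣ :=
  IsCyclotomicExtension.autEquivPow (CyclotomicField N ℚ) (cyclotomic.irreducible_rat N.pos)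

lemma cycAut_pow_spec (N : ℕ+) (σ : CyclotomicField N ℚ ≃ₐ[ℚ] CyclotomicField N ℚ)
    (x : CyclotomicField N ℚ) (hx : x ^ (N : ℕ) = 1) :
    σ x = x ^ ((cycAut N σ : ZMod (N : ℕ))).val := by
  haveI : NeZero ((N : ℕ)) := ⟨N.pos.ne'⟩
  have hξ := zeta_spec N ℚ (CyclotomicField N ℚ)
  obtain ⟨i, -, rfl⟩ := hξ.eq_pow_of_pow_eq_one hx
  have hspec : zeta N ℚ (CyclotomicField N ℚ) ^ ((cycAut N σ : ZMod (N : ℕ))).val = σ (zeta N ℚ (CyclotomicField N ℚ)) :=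
    hξ.autToPow_spec ℚ σ
  rw [map_pow, ← hspec, ← pow_mul, ← pow_mul, Nat.mul_comm]

lemma cycAut_comm (N k : ℕ+) (hdvd : (k : ℕ) ∣ (N : ℕ))
    (f : CyclotomicField k ℚ →ₐ[ℚ] CyclotomicField N ℚ)
    (σ : CyclotomicField N ℚ ≃ₐ[ℚ] CyclotomicField N ℚ) (x : CyclotomicField k ℚ) :
    σ (f x) = f ((cycAut k).symm
      (Units.map (ZMod.castHom hdvd (ZMod (k : ℕ))).toMonoidHom (cycAut N σ)) x) := by
  haveI : NeZero ((k : ℕ)) := ⟨k.pos.ne'⟩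
  set τ := (cycAut k).symm
      (Units.map (ZMod.castHom hdvd (ZMod (k : ℕ))).toMonoidHom (cycAut N σ)) with hτ
  have hζ := zeta_spec k ℚ (CyclotomicField k ℚ)
  set ζ := zeta k ℚ (CyclotomicField k ℚ)
  have key : σ (f ζ) = f (τ ζ) := by
    -- τ ζ = ζ ^ c.val
    have hτζ : ζ ^ ((cycAut k τ : ZMod (k : ℕ))).val = τ ζ := hζ.autToPow_spec ℚ τ
    rw [hτ] at hτζ
    rw [MulEquiv.apply_symm_apply] at hτζ
    -- σ (f ζ) = (f ζ) ^ a.val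
    have hfk : (f ζ) ^ (k : ℕ) = 1 := by rw [← map_pow, hζ.pow_eq_one, map_one]
    have hfN : (f ζ) ^ (N : ℕ) = 1 := by
      obtain ⟨c, hc⟩ := hdvd; exact orderOf_dvd_iff_pow_eq_one.mp (dvd_trans (orderOf_dvd_of_pow_eq_one hfk) ⟨c, hc⟩)
    have hσf := cycAut_pow_spec N σ (f ζ) hfN
    rw [hσf, ← hτζ, map_pow]
    -- exponents agree mod k
    set a : ZMod (N : ℕ) := (cycAut N σ : ZMod (N : ℕ))
    have hcv : ((Units.map (ZMod.castHom hdvd (ZMod (k : ℕ))).toMonoidHom (cycAut N σ) :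
        (ZMod (k : ℕ))ˣ) : ZMod (k : ℕ)) = ((a.val : ℕ) : ZMod (k : ℕ)) := by
      simp [a, ZMod.natCast_val, ZMod.castHom_apply]
    rw [hcv, ZMod.val_natCast]
    conv_lhs => rw [← Nat.div_add_mod a.val (k : ℕ), pow_add, pow_mul, hfk, one_pow, one_mul]
  -- extend from the generator
  have : (σ.toAlgHom.comp f) = (f.comp τ.toAlgHom) := by
    apply (hζ.powerBasis ℚ).algHom_ext
    rw [hζ.powerBasis_gen ℚ]
    simpa using key
  exact AlgHom.congr_fun this x

section crt
variable (n m : ℕ+) (h : Nat.Coprime n m)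

lemma pnat_dvd_fst : (n : ℕ) ∣ ((n * m : ℕ+) : ℕ) := ⟨m, by push_cast; ring⟩
lemma pnat_dvd_snd : (m : ℕ) ∣ ((n * m : ℕ+) : ℕ) := ⟨n, by push_cast; ring⟩

/-- CRT on units. -/
noncomputable def crtUnits : (ZMod ((n * m : ℕ+) : ℕ))ˣ ≃* (ZMod (n : ℕ))ˣ × (ZMod (m : ℕ))ˣ :=
  (Units.mapEquiv (ZMod.chineseRemainder h).toMulEquiv).trans MulEquiv.prodUnits

lemma crtUnits_fst (u : (ZMod ((n * m : ℕ+) : ℕ))ˣ) :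
    (crtUnits n m h u).1 =
      Units.map (ZMod.castHom (pnat_dvd_fst n m) (ZMod (n : ℕ))).toMonoidHom u := by
  ext
  simp [crtUnits, MulEquiv.prodUnits, ZMod.chineseRemainder, Units.coe_mapEquiv,
    ZMod.castHom_apply]
  exact Prod.fst_zmod_cast (u : ZMod ((n * m : ℕ+) : ℕ))

lemma crtUnits_snd (u : (ZMod ((n * m : ℕ+) : ℕ))ˣ) :
    (crtUnits n m h u).2 =
      Units.map (ZMod.castHom (pnat_dvd_snd n m) (ZMod (m : ℕ))).toMonoidHom u := by
  ext
  simp [crtUnits, MulEquiv.prodUnits, ZMod.chineseRemainder, Units.coe_mapEquiv,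
    ZMod.castHom_apply]
  exact Prod.snd_zmod_cast (u : ZMod ((n * m : ℕ+) : ℕ))

end crt

/-- `x` is a normal basis generator of a field `K` over `ℚ`:
the family `(σ x)` indexed by `σ ∈ Gal(K/ℚ)` is a `ℚ`-basis of `K`. -/
def IsNormalBasisGenerator (K : Type*) [Field K] [Algebra ℚ K] (x : K) : Prop :=
  ∃ B : Module.Basis (K ≃ₐ[ℚ] K) ℚ K, ∀ σ : K ≃ₐ[ℚ] K, B σ = σ x

theorem stmt_11 (n m : ℕ+) (h : Nat.Coprime n m)
    (f : CyclotomicField n ℚ →ₐ[ℚ] CyclotomicField (n * m) ℚ)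
    (g : CyclotomicField m ℚ →ₐ[ℚ] CyclotomicField (n * m) ℚ)
    (α : CyclotomicField n ℚ) (hα : IsNormalBasisGenerator (CyclotomicField n ℚ) α)
    (β : CyclotomicField m ℚ) (hβ : IsNormalBasisGenerator (CyclotomicField m ℚ) β) :
    IsNormalBasisGenerator (CyclotomicField (n * m) ℚ) (f α * g β) := by
  classical
  obtain ⟨B₁, hB₁⟩ := hα
  obtain ⟨B₂, hB₂⟩ := hβ
  let K₁ := CyclotomicField n ℚ
  let K₂ := CyclotomicField m ℚ
  let K := CyclotomicField (n * m) ℚ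
  let T : TensorProduct ℚ K₁ K₂ →ₐ[ℚ] K := Algebra.TensorProduct.productMap f g
  have hζ₁ := zeta_spec n ℚ K₁
  have hζ₂ := zeta_spec m ℚ K₂
  have hfζ : IsPrimitiveRoot (f (zeta n ℚ K₁)) (n : ℕ) :=
    hζ₁.map_of_injective f.injective
  have hgζ : IsPrimitiveRoot (g (zeta m ℚ K₂)) (m : ℕ) :=
    hζ₂.map_of_injective g.injective
  have hη : IsPrimitiveRoot (f (zeta n ℚ K₁) * g (zeta m ℚ K₂)) ((n * m : ℕ+) : ℕ) := by
    have hcomm : Commute (f (zeta n ℚ K₁)) (g (zeta m ℚ K₂)) := mul_comm _ _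
    have h1 : orderOf (f (zeta n ℚ K₁)) = (n : ℕ) := hfζ.eq_orderOf.symm
    have h2 : orderOf (g (zeta m ℚ K₂)) = (m : ℕ) := hgζ.eq_orderOf.symm
    have ho : orderOf (f (zeta n ℚ K₁) * g (zeta m ℚ K₂)) = ((n * m : ℕ+) : ℕ) := by
      rw [hcomm.orderOf_mul_eq_mul_orderOf_of_coprime (by rw [h1, h2]; exact h), h1, h2,
        PNat.mul_coe]
    have := IsPrimitiveRoot.orderOf (f (zeta n ℚ K₁) * g (zeta m ℚ K₂))
    rwa [ho] at this
  have hsurj : Function.Surjective T := by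
    have hrange : ⊤ ≤ T.range := by
      rw [← IsCyclotomicExtension.adjoin_primitive_root_eq_top hη]
      apply Algebra.adjoin_le
      rintro x hx
      rw [Set.mem_singleton_iff] at hx
      subst hx
      exact ⟨(zeta n ℚ K₁) ⊗ₜ (zeta m ℚ K₂), rfl⟩
    intro x
    exact hrange (Algebra.mem_top : x ∈ ⊤)
  have hdim : Module.finrank ℚ (TensorProduct ℚ K₁ K₂) = Module.finrank ℚ K := by
    rw [Module.finrank_tensorProduct,
      IsCyclotomicExtension.finrank K₁ (cyclotomic.irreducible_rat n.pos),
      IsCyclotomicExtension.finrank K₂ (cyclotomic.irreducible_rat m.pos),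
      IsCyclotomicExtension.finrank K (cyclotomic.irreducible_rat (n * m).pos),
      PNat.mul_coe, Nat.totient_mul h]
  haveI : FiniteDimensional ℚ K₁ := IsCyclotomicExtension.finiteDimensional {(n : ℕ)} ℚ K₁
  haveI : FiniteDimensional ℚ K₂ := IsCyclotomicExtension.finiteDimensional {(m : ℕ)} ℚ K₂
  haveI : FiniteDimensional ℚ K := IsCyclotomicExtension.finiteDimensional {((n * m : ℕ+) : ℕ)} ℚ K
  haveI : Module.Finite ℚ (TensorProduct ℚ K₁ K₂) := Module.Finite.tensorProduct ℚ K₁ K₂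
  have hinj : Function.Injective T.toLinearMap :=
    (LinearMap.injective_iff_surjective_of_finrank_eq_finrank hdim).2 hsurj
  let TL : TensorProduct ℚ K₁ K₂ ≃ₗ[ℚ] K := LinearEquiv.ofBijective T.toLinearMap ⟨hinj, hsurj⟩
  let e : (K ≃ₐ[ℚ] K) ≃ (K₁ ≃ₐ[ℚ] K₁) × (K₂ ≃ₐ[ℚ] K₂) :=
    (cycAut (n * m)).toEquiv.trans ((crtUnits n m h).toEquiv.trans
      (Equiv.prodCongr (cycAut n).symm.toEquiv (cycAut m).symm.toEquiv))
  refine ⟨((B₁.tensorProduct B₂).map TL).reindex e.symm, fun σ => ?_⟩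
  rw [Module.Basis.reindex_apply, Equiv.symm_symm, Module.Basis.map_apply]
  have htp : (B₁.tensorProduct B₂) (e σ) = (B₁ (e σ).1) ⊗ₜ[ℚ] (B₂ (e σ).2) :=
    Module.Basis.tensorProduct_apply' B₁ B₂ _
  rw [htp, hB₁, hB₂]
  have hTL : TL (((e σ).1 α) ⊗ₜ[ℚ] ((e σ).2 β)) = f ((e σ).1 α) * g ((e σ).2 β) := rfl
  rw [hTL, map_mul]
  have h1 : (e σ).1 = (cycAut n).symm
      (Units.map (ZMod.castHom (pnat_dvd_fst n m) (ZMod (n : ℕ))).toMonoidHom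
        (cycAut (n * m) σ)) := by
    show (cycAut n).symm ((crtUnits n m h ((cycAut (n * m)) σ)).1) = _
    rw [crtUnits_fst]
  have h2 : (e σ).2 = (cycAut m).symm
      (Units.map (ZMod.castHom (pnat_dvd_snd n m) (ZMod (m : ℕ))).toMonoidHom
        (cycAut (n * m) σ)) := by
    show (cycAut m).symm ((crtUnits n m h ((cycAut (n * m)) σ)).2) = _
    rw [crtUnits_snd]
  rw [h1, h2]
  exact congrArg₂ (· * ·) (cycAut_comm (n * m) n (pnat_dvd_fst n m) f σ α).symm
    (cycAut_comm (n * m) m (pnat_dvd_snd n m) g σ β).symm
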